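/- arXiv:2308.03994 — 4 statements merged into one kernel-verified Lean document; each statement's English description precedes it below -/
import Mathlib

section
/- Let F_y be a nonzero real number, κ > 0 a real number, and z_c ∈ ℂ with Im z_c < 0. Define (using the principal branch of the complex logarithm) φ(z) = −(i F_y)/(2π(1+κ))·(κ·log(z − conj z_c) + log(z − z_c)), φ'(z) = −(i F_y)/(2π(1+κ))·(κ/(z − conj z_c) + 1/(z − z_c)), ψ(z) = −(i F_y)/(2π(1+κ))·(log(z − conj z_c) + κ·log(z − z_c)), and the displacement function g(z) = κ·φ(z) − z·conj(φ'(z)) − conj(ψ(z)). Then the modulus of the displacement is unbounded at infinity: ‖g(x)‖ → ∞ as the real variable x → +∞. -/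
open Complex Filter

/-- The complex potential `φ` containing the logarithmic terms produced by the unbalanced
vertical resultant `F_y` (Eq. (2.5) with `F_x = 0`). -/
noncomputable def phiPot (Fy κ : ℝ) (zc : ℂ) (z : ℂ) : ℂ :=
  -(Complex.I * Fy) / (2 * Real.pi * (1 + κ)) *
    (κ * Complex.log (z - (starRingEnd ℂ) zc) + Complex.log (z - zc))

/-- The derivative of the complex potential `φ`. -/
noncomputable def phiPot' (Fy κ : ℝ) (zc : ℂ) (z : ℂ) : ℂ :=
  -(Complex.I * Fy) / (2 * Real.pi * (1 + κ)) *
    (κ / (z - (starRingEnd ℂ) zc) + 1 / (z - zc))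

/-- The complex potential `ψ` containing the logarithmic terms produced by the unbalanced
vertical resultant `F_y` (Eq. (2.5) with `F_x = 0`). -/
noncomputable def psiPot (Fy κ : ℝ) (zc : ℂ) (z : ℂ) : ℂ :=
  -(Complex.I * Fy) / (2 * Real.pi * (1 + κ)) *
    (Complex.log (z - (starRingEnd ℂ) zc) + κ * Complex.log (z - zc))

/-- The displacement function `g(z) = κ φ(z) − z conj(φ'(z)) − conj(ψ(z))`. -/
noncomputable def dispFun (Fy κ : ℝ) (zc : ℂ) (z : ℂ) : ℂ :=
  κ * phiPot Fy κ zc z - z * (starRingEnd ℂ) (phiPot' Fy κ zc z) -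
    (starRingEnd ℂ) (psiPot Fy κ zc z)

/-- Auxiliary: `x/(x-w) → 1` as the real variable `x → ∞`. -/
lemma aux_ratio_tendsto (w : ℂ) :
    Tendsto (fun x : ℝ => (x:ℂ)/((x:ℂ) - w)) atTop (nhds 1) := by
  have h0 : Tendsto (fun x : ℝ => w/((x:ℂ) - w)) atTop (nhds 0) := by
    rw [tendsto_zero_iff_norm_tendsto_zero]
    have hb : Tendsto (fun x : ℝ => ‖w‖ / (x - ‖w‖)) atTop (nhds 0) :=
      tendsto_const_nhds.div_atTop (tendsto_atTop_add_const_right _ _ tendsto_id)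
    refine squeeze_zero' (Eventually.of_forall fun x => norm_nonneg _) ?_ hb
    filter_upwards [eventually_gt_atTop ‖w‖] with x hx
    rw [norm_div]
    have key : x - ‖w‖ ≤ ‖(x:ℂ) - w‖ := by
      calc x - ‖w‖ ≤ x - w.re := by
            linarith [Complex.abs_re_le_norm w, le_abs_self w.re]
        _ ≤ |((x:ℂ) - w).re| := by
            simp only [Complex.sub_re, Complex.ofReal_re]; exact le_abs_self _
        _ ≤ ‖(x:ℂ) - w‖ := Complex.abs_re_le_norm _
    gcongr
  have heq : ∀ᶠ x : ℝ in atTop, (x:ℂ)/((x:ℂ) - w) = 1 + w/((x:ℂ) - w) := by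
    filter_upwards [eventually_gt_atTop ‖w‖] with x hx
    have hne : (x:ℂ) - w ≠ 0 := by
      intro h
      have : (x:ℂ) = w := by linear_combination h
      rw [← this] at hx
      rw [Complex.norm_real, Real.norm_eq_abs] at hx
      have : x ≤ |x| := le_abs_self x
      linarith
    field_simp
    ring
  rw [Filter.tendsto_congr' heq]
  simpa using tendsto_const_nhds.add h0

/-- Auxiliary: closed form of the displacement along the real axis. -/
lemma aux_disp_eq (Fy κ : ℝ) (zc : ℂ) (hzc : zc.im < 0) (x : ℝ) :
    dispFun Fy κ zc (x:ℂ) = -(Complex.I * Fy) / (2 * Real.pi * (1 + κ)) *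
      ((κ^2+κ) * Complex.log ((x:ℂ) - (starRingEnd ℂ) zc)
        + (κ+1) * Complex.log ((x:ℂ) - zc)
        + (x:ℂ) * (κ/((x:ℂ) - zc) + 1/((x:ℂ) - (starRingEnd ℂ) zc))) := by
  have h1 : ((x:ℂ) - (starRingEnd ℂ) zc).arg ≠ Real.pi := by
    intro hh
    obtain ⟨-, h⟩ := Complex.arg_eq_pi_iff.mp hh
    simp [Complex.sub_im, Complex.conj_im] at h
    linarith
  have h2 : ((x:ℂ) - zc).arg ≠ Real.pi := by
    intro hh
    obtain ⟨-, h⟩ := Complex.arg_eq_pi_iff.mp hh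
    simp [Complex.sub_im] at h
    linarith
  have e1 : (starRingEnd ℂ) (Complex.log ((x:ℂ) - (starRingEnd ℂ) zc)) =
      Complex.log ((x:ℂ) - zc) := by
    rw [← Complex.log_conj _ h1]
    congr 1
    simp [map_sub, Complex.conj_conj, Complex.conj_ofReal]
  have e2 : (starRingEnd ℂ) (Complex.log ((x:ℂ) - zc)) =
      Complex.log ((x:ℂ) - (starRingEnd ℂ) zc) := by
    rw [← Complex.log_conj _ h2]
    congr 1
    simp [map_sub, Complex.conj_ofReal]
  simp only [dispFun, phiPot, phiPot', psiPot, map_mul, map_add, map_div₀, map_sub, map_neg,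
    map_one, map_ofNat, Complex.conj_I, Complex.conj_ofReal, Complex.conj_conj, e1, e2]
  ring

/-- With a nonzero unbalanced resultant `F_y`, the displacement modulus is unbounded as the
real variable `x → +∞`: the displacement has a singularity at infinity. -/
theorem displacement_singularity_at_infinity (Fy κ : ℝ) (hF : Fy ≠ 0) (hκ : 0 < κ)
    (zc : ℂ) (hzc : zc.im < 0) :
    Tendsto (fun x : ℝ => ‖dispFun Fy κ zc (x : ℂ)‖) atTop atTop := by
  have hπ := Real.pi_pos
  set c : ℂ := -(Complex.I * Fy) / (2 * Real.pi * (1 + κ)) with hcdef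
  have hcne : c ≠ 0 := by
    rw [hcdef]
    apply div_ne_zero
    · simp [Complex.I_ne_zero, Complex.ofReal_eq_zero, hF]
    · have h1 : (1 : ℂ) + κ ≠ 0 := by
        intro h
        have := congrArg Complex.re h
        simp at this
        linarith
      have h2 : (Real.pi : ℂ) ≠ 0 := by
        simp [Complex.ofReal_eq_zero]
      exact mul_ne_zero (mul_ne_zero two_ne_zero h2) h1
  have hcpos : 0 < ‖c‖ := norm_pos_iff.mpr hcne
  -- remainder term tends to κ + 1
  have hr : Tendsto (fun x : ℝ => (x:ℂ) * (κ/((x:ℂ) - zc) + 1/((x:ℂ) - (starRingEnd ℂ) zc)))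
      atTop (nhds ((κ:ℂ)+1)) := by
    have heq : (fun x : ℝ => (x:ℂ) * (κ/((x:ℂ) - zc) + 1/((x:ℂ) - (starRingEnd ℂ) zc)))
        = fun x : ℝ => (κ:ℂ) * ((x:ℂ)/((x:ℂ)-zc)) + (x:ℂ)/((x:ℂ)-(starRingEnd ℂ) zc) := by
      funext x; ring
    rw [heq]
    have := ((aux_ratio_tendsto zc).const_mul (κ:ℂ)).add (aux_ratio_tendsto ((starRingEnd ℂ) zc))
    simpa using this
  have hrre : ∀ᶠ x : ℝ in atTop,
      0 ≤ ((x:ℂ) * (κ/((x:ℂ) - zc) + 1/((x:ℂ) - (starRingEnd ℂ) zc))).re := by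
    have hre : Tendsto (fun x : ℝ =>
        ((x:ℂ) * (κ/((x:ℂ) - zc) + 1/((x:ℂ) - (starRingEnd ℂ) zc))).re) atTop
        (nhds (((κ:ℂ)+1).re)) := (Complex.continuous_re.tendsto _).comp hr
    have hval : ((κ:ℂ)+1).re = κ+1 := by simp
    rw [hval] at hre
    exact (hre.eventually (eventually_gt_nhds (by linarith : (0:ℝ) < κ+1))).mono
      fun x hx => le_of_lt hx
  -- main lower bound
  have key : ∀ᶠ x : ℝ in atTop,
      ‖c‖ * ((κ+1) * Real.log (x - zc.re)) ≤ ‖dispFun Fy κ zc (x:ℂ)‖ := by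
    filter_upwards [hrre, eventually_ge_atTop (zc.re + 1)] with x hx hxl
    rw [aux_disp_eq Fy κ zc hzc x, ← hcdef, norm_mul]
    set u : ℂ := (κ^2+κ) * Complex.log ((x:ℂ) - (starRingEnd ℂ) zc)
        + (κ+1) * Complex.log ((x:ℂ) - zc)
        + (x:ℂ) * (κ/((x:ℂ) - zc) + 1/((x:ℂ) - (starRingEnd ℂ) zc)) with hu
    have habs1 : (1:ℝ) ≤ ‖(x:ℂ) - (starRingEnd ℂ) zc‖ := by
      calc (1:ℝ) ≤ x - zc.re := by linarith
        _ = ((x:ℂ) - (starRingEnd ℂ) zc).re := by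
            simp [Complex.sub_re, Complex.conj_re]
        _ ≤ ‖(x:ℂ) - (starRingEnd ℂ) zc‖ := Complex.re_le_norm _
    have habs2 : x - zc.re ≤ ‖(x:ℂ) - zc‖ := by
      calc x - zc.re = ((x:ℂ) - zc).re := by simp [Complex.sub_re]
        _ ≤ ‖(x:ℂ) - zc‖ := Complex.re_le_norm _
    have hure : (κ+1) * Real.log (x - zc.re) ≤ u.re := by
      have h1 : (0:ℝ) ≤ (κ^2+κ) * Real.log (‖(x:ℂ) - (starRingEnd ℂ) zc‖) := by
        apply mul_nonneg (by positivity) (Real.log_nonneg habs1)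
      have h2 : (κ+1) * Real.log (x - zc.re)
          ≤ (κ+1) * Real.log (‖(x:ℂ) - zc‖) := by
        apply mul_le_mul_of_nonneg_left _ (by linarith)
        exact Real.log_le_log (by linarith) habs2
      have ha : (((κ:ℂ)^2+κ) * Complex.log ((x:ℂ) - (starRingEnd ℂ) zc)).re
          = (κ^2+κ) * Real.log (‖(x:ℂ) - (starRingEnd ℂ) zc‖) := by
        rw [show ((κ:ℂ)^2+κ) = ((κ^2+κ : ℝ) : ℂ) by push_cast; ring,
          Complex.re_ofReal_mul, Complex.log_re]
      have hb : (((κ:ℂ)+1) * Complex.log ((x:ℂ) - zc)).re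
          = (κ+1) * Real.log (‖(x:ℂ) - zc‖) := by
        rw [show ((κ:ℂ)+1) = ((κ+1 : ℝ) : ℂ) by push_cast; ring,
          Complex.re_ofReal_mul, Complex.log_re]
      have hre : u.re = (κ^2+κ) * Real.log (‖(x:ℂ) - (starRingEnd ℂ) zc‖)
          + (κ+1) * Real.log (‖(x:ℂ) - zc‖)
          + ((x:ℂ) * (κ/((x:ℂ) - zc) + 1/((x:ℂ) - (starRingEnd ℂ) zc))).re := by
        rw [hu, Complex.add_re, Complex.add_re, ha, hb]
      rw [hre]
      linarith
    have : u.re ≤ ‖u‖ := Complex.re_le_norm u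
    have hfin : (κ+1) * Real.log (x - zc.re) ≤ ‖u‖ := le_trans hure this
    exact mul_le_mul_of_nonneg_left hfin (le_of_lt hcpos)
  refine tendsto_atTop_mono' _ key ?_
  have hlog : Tendsto (fun x : ℝ => Real.log (x - zc.re)) atTop atTop :=
    Real.tendsto_log_atTop.comp (tendsto_atTop_add_const_right _ _ tendsto_id)
  have heq : (fun x : ℝ => ‖c‖ * ((κ+1) * Real.log (x - zc.re)))
      = fun x => (‖c‖ * (κ+1)) * Real.log (x - zc.re) := by funext x; ring
  rw [heq]
  exact hlog.const_mul_atTop (by positivity)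
end

section
/- Let 0 < R < h, a = √(h² − R²), r = R/(h + √(h² − R²)). For every z ∈ ℂ with Im z < 0 and |z + ih| > R, one has r < |(z + ia)/(z − ia)| < 1. That is, the forward Verruijt mapping sends the geomaterial region (the open lower half plane with the closed tunnel disk removed) into the open annulus r < |ζ| < 1. -/
/-- The forward Verruijt mapping `ζ(z) = (z + ia)/(z − ia)`, with `a = √(h² − R²)` and
`r = R/(h + √(h² − R²))`, sends the geomaterial region (the open lower half plane with the
closed tunnel disk removed) into the open annulus `r < |ζ| < 1`. -/
theorem verruijt_maps_geomaterial_into_annulus (R h a r : ℝ) (hR : 0 < R) (hRh : R < h)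
    (ha : a = Real.sqrt (h ^ 2 - R ^ 2))
    (hr : r = R / (h + Real.sqrt (h ^ 2 - R ^ 2))) :
    ∀ z : ℂ, z.im < 0 → R < ‖z + h * Complex.I‖ →
      r < ‖(z + a * Complex.I) / (z - a * Complex.I)‖ ∧
      ‖(z + a * Complex.I) / (z - a * Complex.I)‖ < 1 := by
  intro z hzim hzdisk
  have hh : 0 < h := lt_trans hR hRh
  have hpos : (0:ℝ) < h ^ 2 - R ^ 2 := by nlinarith
  have ha2 : a ^ 2 = h ^ 2 - R ^ 2 := by
    rw [ha]; exact Real.sq_sqrt (le_of_lt hpos)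
  have hapos : 0 < a := by rw [ha]; exact Real.sqrt_pos.mpr hpos
  have hha : 0 < h + a := by linarith
  have hra : r * (h + a) = R := by
    rw [hr, ← ha]; field_simp
  have hrpos : 0 < r := by
    rw [hr, ← ha]; positivity
  set x := z.re with hx
  set y := z.im with hy
  have hA2 : (‖z + a * Complex.I‖) ^ 2 = x ^ 2 + (y + a) ^ 2 := by
    rw [Complex.sq_norm, Complex.normSq_apply]
    simp [Complex.add_im, Complex.add_re]
    ring
  have hB2 : (‖z - a * Complex.I‖) ^ 2 = x ^ 2 + (y - a) ^ 2 := by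
    rw [Complex.sq_norm, Complex.normSq_apply]
    simp [Complex.sub_im, Complex.sub_re]
    ring
  have hD2 : (‖z + h * Complex.I‖) ^ 2 = x ^ 2 + (y + h) ^ 2 := by
    rw [Complex.sq_norm, Complex.normSq_apply]
    simp [Complex.add_im, Complex.add_re]
    ring
  have hdisk2 : R ^ 2 < x ^ 2 + (y + h) ^ 2 := by
    rw [← hD2]
    exact pow_lt_pow_left₀ hzdisk (le_of_lt hR) (by norm_num)
  have hBpos : 0 < ‖z - a * Complex.I‖ := by
    apply norm_pos_iff.mpr
    intro hcon
    have : (z - a * Complex.I).im = 0 := by rw [hcon]; simp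
    simp [Complex.sub_im] at this
    rw [← hy] at this
    nlinarith
  have hApos : 0 ≤ ‖z + a * Complex.I‖ := norm_nonneg _
  -- upper bound: A^2 < B^2
  have hABsq : (‖z + a * Complex.I‖) ^ 2 < (‖z - a * Complex.I‖) ^ 2 := by
    rw [hA2, hB2]; nlinarith
  have hAB : ‖z + a * Complex.I‖ < ‖z - a * Complex.I‖ :=
    lt_of_pow_lt_pow_left₀ 2 (le_of_lt hBpos) hABsq
  -- lower bound
  have key : R ^ 2 * (x ^ 2 + (y - a) ^ 2) < (h + a) ^ 2 * (x ^ 2 + (y + a) ^ 2) := by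
    nlinarith [mul_pos (mul_pos (by linarith : (0:ℝ) < 2 * a) hha)
      (by linarith : (0:ℝ) < x ^ 2 + (y + h) ^ 2 - R ^ 2)]
  have h1 : (h + a) ^ 2 * (r ^ 2 * (x ^ 2 + (y - a) ^ 2)) = R ^ 2 * (x ^ 2 + (y - a) ^ 2) := by
    rw [← hra]; ring
  have h2 : r ^ 2 * (x ^ 2 + (y - a) ^ 2) < x ^ 2 + (y + a) ^ 2 := by
    have h3 : (h + a) ^ 2 * (r ^ 2 * (x ^ 2 + (y - a) ^ 2)) <
        (h + a) ^ 2 * (x ^ 2 + (y + a) ^ 2) := by rw [h1]; exact key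
    exact lt_of_mul_lt_mul_left h3 (sq_nonneg _)
  have hrBA : r * ‖z - a * Complex.I‖ < ‖z + a * Complex.I‖ := by
    apply lt_of_pow_lt_pow_left₀ 2 hApos
    rw [mul_pow, hB2, hA2]
    exact h2
  rw [norm_div]
  constructor
  · rw [lt_div_iff₀ hBpos]; exact hrBA
  · rw [div_lt_one hBpos]; exact hAB
end

section
/- Let 0 < R < h, a = √(h² − R²), r = R/(h + √(h² − R²)), and z(ζ) = −ia·(1 + ζ)/(1 − ζ). Then for every complex ζ with |ζ| = r, the image point satisfies |z(ζ) + ih| = R; that is, the backward Verruijt mapping sends the circle of radius r centered at the origin onto the tunnel periphery. -/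
/-- The backward Verruijt mapping `z(ζ) = −ia(1 + ζ)/(1 − ζ)`, with `a = √(h² − R²)` and
`r = R/(h + √(h² − R²))`, sends the circle `|ζ| = r` onto the tunnel periphery
`|z + ih| = R`. -/
theorem verruijt_backward_maps_inner_circle (R h a r : ℝ) (hR : 0 < R) (hRh : R < h)
    (ha : a = Real.sqrt (h ^ 2 - R ^ 2))
    (hr : r = R / (h + Real.sqrt (h ^ 2 - R ^ 2))) :
    ∀ ζ : ℂ, ‖ζ‖ = r →
      ‖-Complex.I * a * (1 + ζ) / (1 - ζ) + h * Complex.I‖ = R := by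
  have h0 : (0:ℝ) < h := hR.trans hRh
  have ha0 : 0 ≤ a := ha ▸ Real.sqrt_nonneg _
  have ha2 : a ^ 2 = h ^ 2 - R ^ 2 := by
    rw [ha]; exact Real.sq_sqrt (by nlinarith)
  have hs : 0 < h + a := by linarith
  have he2 : (h + a) * r = R := by
    rw [hr, ← ha]; field_simp
  have hrpos : 0 < r := by
    have := he2; nlinarith
  have hd : h - a = R * r := by
    have h1 : (h - a) * (h + a) = (R * r) * (h + a) := by nlinarith
    exact mul_right_cancel₀ (ne_of_gt hs) h1
  have hr1 : r < 1 := by nlinarith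
  intro ζ hζ
  have hζ1 : (1:ℂ) - ζ ≠ 0 := by
    intro hcon
    have : ζ = 1 := by linear_combination -hcon
    rw [this] at hζ
    simp at hζ
    nlinarith
  have key : -Complex.I * a * (1 + ζ) / (1 - ζ) + h * Complex.I
      = Complex.I * ((((h:ℂ) - a) - ((h:ℂ) + a) * ζ) / (1 - ζ)) := by
    field_simp
    ring
  rw [key, norm_mul, norm_div, Complex.norm_I, one_mul,
    div_eq_iff (norm_ne_zero_iff.mpr hζ1)]
  have habs0 : 0 ≤ ‖((h:ℂ) - a) - ((h:ℂ) + a) * ζ‖ := norm_nonneg _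
  have habs1 : 0 ≤ R * ‖1 - ζ‖ := by positivity
  have he3 : ζ.re ^ 2 + ζ.im ^ 2 = r ^ 2 := by
    have := Complex.sq_norm ζ
    rw [hζ] at this
    rw [this, Complex.normSq_apply]; ring
  have hsq : (‖((h:ℂ) - a) - ((h:ℂ) + a) * ζ‖) ^ 2
      = (R * ‖1 - ζ‖) ^ 2 := by
    rw [mul_pow, Complex.sq_norm, Complex.sq_norm, Complex.normSq_apply, Complex.normSq_apply]
    simp only [Complex.sub_re, Complex.sub_im, Complex.add_re, Complex.add_im,
      Complex.mul_re, Complex.mul_im, Complex.one_re, Complex.one_im,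
      Complex.ofReal_re, Complex.ofReal_im]
    linear_combination ((h - a) + R * r - 2 * ζ.re * (h + a)) * hd
      + ((h + a) * r + R - 2 * ζ.re * R) * he2 + ((h + a) ^ 2 - R ^ 2) * he3
  nlinarith [hsq, habs0, habs1]
end

section
/- Let 0 < R < h, a = √(h² − R²), r = R/(h + √(h² − R²)), and z(ζ) = −ia·(1 + ζ)/(1 − ζ). Then for every complex ζ with r < |ζ| < 1, the image point satisfies Im z(ζ) < 0 and |z(ζ) + ih| > R; that is, the backward Verruijt mapping sends the open annulus r < |ζ| < 1 into the geomaterial region (the open lower half plane with the closed tunnel disk removed). -/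
set_option maxHeartbeats 1000000 in
/-- The backward Verruijt mapping `z(ζ) = −ia(1 + ζ)/(1 − ζ)`, with `a = √(h² − R²)` and
`r = R/(h + √(h² − R²))`, sends the open annulus `r < |ζ| < 1` into the geomaterial region
(the open lower half plane with the closed tunnel disk removed). -/
theorem verruijt_backward_maps_annulus (R h a r : ℝ) (hR : 0 < R) (hRh : R < h)
    (ha : a = Real.sqrt (h ^ 2 - R ^ 2))
    (hr : r = R / (h + Real.sqrt (h ^ 2 - R ^ 2))) :
    ∀ ζ : ℂ, r < ‖ζ‖ → ‖ζ‖ < 1 →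
      (-Complex.I * a * (1 + ζ) / (1 - ζ)).im < 0 ∧
      R < ‖-Complex.I * a * (1 + ζ) / (1 - ζ) + h * Complex.I‖ := by
  have hh : 0 < h := hR.trans hRh
  have hsq : 0 < h ^ 2 - R ^ 2 := by nlinarith
  have ha0 : 0 < a := ha ▸ Real.sqrt_pos.2 hsq
  have ha2 : a ^ 2 = h ^ 2 - R ^ 2 := by rw [ha]; exact Real.sq_sqrt hsq.le
  have hha : 0 < h + a := by linarith
  have hr0 : 0 < r := by rw [hr, ← ha]; positivity
  have hrR : r * (h + a) = R := by rw [hr, ← ha]; field_simp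
  intro ζ h1 h2
  have hz1 : ζ ≠ 1 := by rintro rfl; simp at h2
  have hden : (1 : ℂ) - ζ ≠ 0 := sub_ne_zero.2 (Ne.symm hz1)
  have habs : ζ.re ^ 2 + ζ.im ^ 2 = (‖ζ‖) ^ 2 := by
    rw [Complex.sq_norm, Complex.normSq_apply]; ring
  have ht1 : ζ.re ^ 2 + ζ.im ^ 2 < 1 := by
    rw [habs]; nlinarith [norm_nonneg ζ]
  have ht2 : r ^ 2 < ζ.re ^ 2 + ζ.im ^ 2 := by
    rw [habs]; nlinarith [norm_nonneg ζ]
  have hN : 0 < (1 - ζ.re) ^ 2 + ζ.im ^ 2 := by nlinarith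
  constructor
  · rw [Complex.div_im, div_sub_div_same]
    apply div_neg_of_neg_of_pos
    · simp only [Complex.mul_im, Complex.mul_re, Complex.neg_re, Complex.neg_im,
        Complex.I_re, Complex.I_im, Complex.ofReal_re, Complex.ofReal_im,
        Complex.add_re, Complex.add_im, Complex.one_re, Complex.one_im,
        Complex.sub_re, Complex.sub_im]
      nlinarith [mul_pos ha0 (by linarith : (0:ℝ) < 1 - (ζ.re ^ 2 + ζ.im ^ 2))]
    · rw [Complex.normSq_apply]
      simp only [Complex.sub_re, Complex.sub_im, Complex.one_re, Complex.one_im]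
      nlinarith
  · have hkey : -Complex.I * a * (1 + ζ) / (1 - ζ) + h * Complex.I
        = (((h : ℂ) - a) - ((h : ℂ) + a) * ζ) * Complex.I / (1 - ζ) := by
      field_simp
      ring
    rw [hkey, norm_div, norm_mul, Complex.norm_I, mul_one,
      lt_div_iff₀ (by simpa using norm_pos_iff.2 hden)]
    refine lt_of_pow_lt_pow_left₀ 2 (norm_nonneg _) ?_
    have e1 : (‖((h : ℂ) - a) - ((h : ℂ) + a) * ζ‖) ^ 2
        = (h - a - (h + a) * ζ.re) ^ 2 + ((h + a) * ζ.im) ^ 2 := by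
      rw [Complex.sq_norm, Complex.normSq_apply]
      simp only [Complex.sub_re, Complex.sub_im, Complex.add_re, Complex.add_im,
        Complex.mul_re, Complex.mul_im, Complex.ofReal_re, Complex.ofReal_im]
      ring
    have e2 : (‖1 - ζ‖) ^ 2 = (1 - ζ.re) ^ 2 + ζ.im ^ 2 := by
      rw [Complex.sq_norm, Complex.normSq_apply]
      simp only [Complex.sub_re, Complex.sub_im, Complex.one_re, Complex.one_im]
      ring
    rw [mul_pow, e1, e2]
    have hma : h - a = r ^ 2 * (h + a) := by
      have hR2 : (h - a) * (h + a) = R ^ 2 := by nlinarith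
      nlinarith [sq_nonneg (h + a)]
    nlinarith [mul_pos (mul_pos ha0 hha) (by linarith : (0:ℝ) < ζ.re ^ 2 + ζ.im ^ 2 - r ^ 2)]
end
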